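/- arXiv:2111.08672 — 4 statements merged into one kernel-verified Lean document; each statement's English description precedes it below -/
import Mathlib

section
/- (Theorem 2.3, explicit form) Fix β ∈ (0,1) and θ ∈ (0,1). Suppose the counting process N(t) satisfies P{N(t) ≤ θ t^β / Γ(1+β)} ≤ C_β / t^β for all t > 0, for some constant C_β > 0, and suppose the embedded chain converges geometrically: there are constants c₁ > 0 and ℓ* > 0 such that ‖q^{(n)}_{i,·} − π‖ ≤ c₁ e^{−n/(e ℓ*)} for every state i and every n ≥ 0. Then for every ε > 0, T^cont_ε ≤ ( max{ C_β, (e Γ(1+β)/θ) ℓ* } · 2 c₁ |𝒮| / ε )^{1/β}. -/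
open MeasureTheory ProbabilityTheory Filter Finset

/-- Total variation distance between two (probability) vectors on a finite set. -/
noncomputable def tvDist {𝒮 : Type*} [Fintype 𝒮] (f g : 𝒮 → ℝ) : ℝ :=
  (1 / 2) * ∑ x, |f x - g x|

set_option maxHeartbeats 1600000 in
/-- Theorem 2.3, explicit form: if the counting process satisfies
`P{N(t) ≤ θ t^β / Γ(1+β)} ≤ C_β / t^β` and the embedded chain converges geometrically,
`‖q^{(n)}_{i,·} − π‖ ≤ c₁ e^{−n/(e ℓ*)}`, then
`T^cont_ε ≤ (max{C_β, (e Γ(1+β)/θ) ℓ*} · 2 c₁ |𝒮| / ε)^{1/β}`. -/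
theorem mixing_time_upper_bound_MittagLeffler
    {𝒮 : Type*} [Fintype 𝒮] [DecidableEq 𝒮] [Nonempty 𝒮]
    (Q : Matrix 𝒮 𝒮 ℝ)
    (hQnonneg : ∀ i j, 0 ≤ Q i j)
    (hQrow : ∀ i, ∑ j, Q i j = 1)
    (π : 𝒮 → ℝ)
    (hconv : ∀ i j, Tendsto (fun n : ℕ => (Q ^ n) i j) atTop (nhds (π j)))
    {Ω : Type*} [MeasurableSpace Ω] (μ : Measure Ω) [IsProbabilityMeasure μ]
    (T : ℕ → Ω → ℝ)
    (hTmeas : ∀ n, Measurable (T n))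
    (hTpos : ∀ n, ∀ᵐ ω ∂μ, 0 < T n ω)
    (hTindep : iIndepFun T μ)
    (hTident : ∀ n, IdentDistrib (T n) (T 0) μ μ)
    (Spart : ℕ → Ω → ℝ)
    (hSpart : ∀ n ω, Spart n ω = ∑ k ∈ Finset.range n, T k ω)
    (N : ℝ → Ω → ℕ)
    (hN : ∀ t ω, N t ω = sSup {n : ℕ | Spart n ω ≤ t})
    (p : 𝒮 → 𝒮 → ℝ → ℝ)
    (hp : ∀ i j t, p i j t = ∑' n : ℕ, (Q ^ n) i j * (μ {ω | N t ω = n}).toReal)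
    (β θ Cβ c₁ ℓ : ℝ)
    (hβ : β ∈ Set.Ioo (0 : ℝ) 1) (hθ : θ ∈ Set.Ioo (0 : ℝ) 1)
    (hCβ : 0 < Cβ) (hc₁ : 0 < c₁) (hℓ : 0 < ℓ)
    -- tail bound for the counting process
    (hNtail : ∀ t : ℝ, 0 < t →
      (μ {ω | (N t ω : ℝ) ≤ θ * t ^ β / Real.Gamma (1 + β)}).toReal ≤ Cβ / t ^ β)
    -- geometric convergence of the embedded chain
    (hgeo : ∀ i (n : ℕ),
      tvDist (fun j => (Q ^ n) i j) π ≤ c₁ * Real.exp (-(n : ℝ) / (Real.exp 1 * ℓ)))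
    -- the continuous mixing time
    (Tcont : ℝ → ℝ)
    (hTcont : ∀ ε, Tcont ε = sInf {t : ℝ | ∑ i, tvDist (fun j => p i j t) π ≤ ε}) :
    ∀ ε : ℝ, 0 < ε →
      Tcont ε ≤ (max Cβ (Real.exp 1 * Real.Gamma (1 + β) / θ * ℓ)
          * (2 * c₁ * (Fintype.card 𝒮 : ℝ)) / ε) ^ (1 / β) := by
  intro ε hε
  obtain ⟨hβ0, hβ1⟩ := hβ
  obtain ⟨hθ0, hθ1⟩ := hθ
  have hΓ : 0 < Real.Gamma (1 + β) := Real.Gamma_pos_of_pos (by linarith)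
  have he : (0:ℝ) < Real.exp 1 := Real.exp_pos 1
  set M : ℝ := max Cβ (Real.exp 1 * Real.Gamma (1 + β) / θ * ℓ) with hM
  have hMpos : 0 < M := lt_of_lt_of_le hCβ (le_max_left _ _)
  have hcard : (0:ℝ) < (Fintype.card 𝒮 : ℝ) := by exact_mod_cast Fintype.card_pos
  set base : ℝ := M * (2 * c₁ * (Fintype.card 𝒮 : ℝ)) / ε with hbase
  have hbasepos : 0 < base := by positivity
  set t : ℝ := base ^ (1 / β) with htdef
  have ht : 0 < t := Real.rpow_pos_of_pos hbasepos _
  have htβ : t ^ β = base := by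
    rw [htdef, ← Real.rpow_mul hbasepos.le, one_div_mul_cancel hβ0.ne', Real.rpow_one]
  have htβpos : 0 < t ^ β := htβ ▸ hbasepos
  set m : ℝ := θ * t ^ β / Real.Gamma (1 + β) with hm
  have hmpos : 0 < m := by positivity
  -- powers of Q are stochastic
  have hQn : ∀ (n : ℕ) i, (∀ j, 0 ≤ (Q ^ n) i j) ∧ ∑ j, (Q ^ n) i j = 1 := by
    intro n
    induction n with
    | zero =>
      intro i
      constructor
      · intro j; rw [pow_zero, Matrix.one_apply]; split <;> norm_num
      · simp [Matrix.one_apply]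
    | succ n ih =>
      intro i
      have h1 : ∀ j, 0 ≤ (Q ^ (n+1)) i j := by
        intro j
        rw [pow_succ, Matrix.mul_apply]
        exact Finset.sum_nonneg fun k _ => mul_nonneg ((ih i).1 k) (hQnonneg k j)
      refine ⟨h1, ?_⟩
      calc ∑ j, (Q ^ (n+1)) i j = ∑ j, ∑ k, (Q ^ n) i k * Q k j := by
            simp [pow_succ, Matrix.mul_apply]
        _ = ∑ k, (Q ^ n) i k * ∑ j, Q k j := by
            rw [Finset.sum_comm]; simp [Finset.mul_sum]
        _ = 1 := by simp [hQrow, (ih i).2]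
  have hQ01 : ∀ (n : ℕ) i j, 0 ≤ (Q ^ n) i j ∧ (Q ^ n) i j ≤ 1 := by
    intro n i j
    refine ⟨(hQn n i).1 j, ?_⟩
    calc (Q ^ n) i j ≤ ∑ k, (Q ^ n) i k :=
          Finset.single_le_sum (fun k _ => (hQn n i).1 k) (Finset.mem_univ j)
      _ = 1 := (hQn n i).2
  -- measurability of partial sums
  have hSmeas : ∀ n, Measurable (Spart n) := by
    intro n
    have : Spart n = fun ω => ∑ k ∈ Finset.range n, T k ω := funext fun ω => hSpart n ω
    rw [this]
    exact Finset.measurable_sum _ fun k _ => hTmeas k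
  -- characterization of the counting events
  have hchar : ∀ (n : ℕ) (ω : Ω), N t ω = n ↔
      ((Spart n ω ≤ t ∧ ∀ k, n < k → t < Spart k ω) ∨
        (¬ BddAbove {k : ℕ | Spart k ω ≤ t} ∧ n = 0)) := by
    intro n ω
    set S : Set ℕ := {k : ℕ | Spart k ω ≤ t} with hSdef
    have hS0 : (0:ℕ) ∈ S := by
      simp only [hSdef, Set.mem_setOf_eq, hSpart, Finset.range_zero, Finset.sum_empty]
      exact ht.le
    have hSne : S.Nonempty := ⟨0, hS0⟩
    rw [hN]
    constructor
    · intro h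
      by_cases hb : BddAbove S
      · left
        have hmem : sSup S ∈ S := Nat.sSup_mem hSne hb
        rw [h] at hmem
        refine ⟨hmem, ?_⟩
        intro k hk
        by_contra hle
        push_neg at hle
        have : k ≤ n := h ▸ le_csSup hb hle
        omega
      · right
        refine ⟨hb, ?_⟩
        rw [csSup_of_not_bddAbove hb, csSup_empty] at h
        exact h.symm
    · rintro (⟨h1, h2⟩ | ⟨hb, rfl⟩)
      · have hub : ∀ k ∈ S, k ≤ n := by
          intro k hk
          by_contra hkn
          push_neg at hkn
          exact absurd hk (not_le.mpr (h2 k hkn))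
        exact le_antisymm (csSup_le hSne hub) (le_csSup ⟨n, hub⟩ h1)
      · rw [csSup_of_not_bddAbove hb, csSup_empty]
        rfl
  -- measurability of the counting events
  have hAmeas : ∀ n : ℕ, MeasurableSet {ω | N t ω = n} := by
    intro n
    have hset : {ω | N t ω = n} =
        ({ω | Spart n ω ≤ t} ∩ ⋂ k, ⋂ (_ : n < k), {ω | t < Spart k ω}) ∪
          ((⋂ (j : ℕ), ⋃ k, ⋃ (_ : j < k), {ω | Spart k ω ≤ t}) ∩ {ω : Ω | n = 0}) := by
      ext ω
      rw [Set.mem_setOf_eq, hchar n ω]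
      simp only [Set.mem_union, Set.mem_inter_iff, Set.mem_setOf_eq, Set.mem_iInter,
        Set.mem_iUnion]
      constructor
      · rintro (⟨h1, h2⟩ | ⟨hb, h0⟩)
        · exact Or.inl ⟨h1, fun k hk => h2 k hk⟩
        · refine Or.inr ⟨?_, h0⟩
          intro j
          by_contra hcon
          push_neg at hcon
          exact hb ⟨j, fun k hk => le_of_not_gt fun hjk => absurd hk (not_le.mpr (hcon k hjk))⟩
      · rintro (⟨h1, h2⟩ | ⟨hb, h0⟩)
        · exact Or.inl ⟨h1, h2⟩
        · refine Or.inr ⟨?_, h0⟩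
          rintro ⟨j, hj⟩
          obtain ⟨k, hjk, hk⟩ := hb j
          exact absurd (hj hk) (not_le.mpr hjk)
    rw [hset]
    apply MeasurableSet.union
    · exact ((hSmeas n measurableSet_Iic).inter
        (MeasurableSet.iInter fun k => MeasurableSet.iInter fun _ =>
          hSmeas k measurableSet_Ioi))
    · apply MeasurableSet.inter
      · exact MeasurableSet.iInter fun j => MeasurableSet.iUnion fun k =>
          MeasurableSet.iUnion fun _ => hSmeas k measurableSet_Iic
      · by_cases h : n = 0 <;> simp [h]
  -- disjointness and covering
  have hdisj : Pairwise (Function.onFun Disjoint fun n : ℕ => {ω | N t ω = n}) := by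
    intro a b hab
    simp only [Function.onFun, Set.disjoint_left, Set.mem_setOf_eq]
    intro ω ha hbω
    exact hab (ha ▸ hbω ▸ rfl)
  have hcover : (⋃ n : ℕ, {ω | N t ω = n}) = Set.univ := by
    ext ω
    simp only [Set.mem_iUnion, Set.mem_setOf_eq, Set.mem_univ, iff_true]
    exact ⟨N t ω, rfl⟩
  have hPsumE : ∑' n : ℕ, μ {ω | N t ω = n} = 1 := by
    rw [← measure_iUnion hdisj hAmeas, hcover, measure_univ]
  set P : ℕ → ℝ := fun n => (μ {ω | N t ω = n}).toReal with hP
  have hPfin : ∀ n, μ {ω | N t ω = n} ≠ ⊤ := fun n => measure_ne_top μ _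
  have hPsummable : Summable P :=
    ENNReal.summable_toReal (by rw [hPsumE]; exact ENNReal.one_ne_top)
  have hPtsum : ∑' n, P n = 1 := by
    rw [hP, ← ENNReal.tsum_toReal_eq hPfin, hPsumE, ENNReal.toReal_one]
  have hPnonneg : ∀ n, 0 ≤ P n := fun n => ENNReal.toReal_nonneg
  set K : Finset ℕ := Finset.range (⌊m⌋₊ + 1) with hK
  -- key per-state bound
  have key : ∀ i, tvDist (fun j => p i j t) π ≤
      c₁ * (Cβ / t ^ β) + c₁ * ((Real.exp 1 * Real.Gamma (1 + β) / θ * ℓ) / t ^ β) := by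
    intro i
    have hπbd : ∀ j, |π j| ≤ 1 := by
      intro j
      rw [abs_le]
      constructor
      · exact ge_of_tendsto (hconv i j)
          (Eventually.of_forall fun n => by linarith [(hQ01 n i j).1])
      · exact le_of_tendsto (hconv i j) (Eventually.of_forall fun n => (hQ01 n i j).2)
    have hQsummable : ∀ j, Summable fun n : ℕ => (Q ^ n) i j * P n := by
      intro j
      exact Summable.of_nonneg_of_le (fun n => mul_nonneg (hQ01 n i j).1 (hPnonneg n))
        (fun n => mul_le_of_le_one_left (hPnonneg n) (hQ01 n i j).2) hPsummable
    have habs_summable : ∀ j, Summable fun n : ℕ => |(Q ^ n) i j - π j| * P n := by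
      intro j
      refine Summable.of_nonneg_of_le (fun n => mul_nonneg (abs_nonneg _) (hPnonneg n))
        (fun n => ?_) (hPsummable.mul_left 2)
      have hb2 : |(Q ^ n) i j - π j| ≤ 2 := by
        calc |(Q ^ n) i j - π j| ≤ |(Q ^ n) i j| + |π j| := abs_sub _ _
          _ ≤ 1 + 1 := add_le_add
              (abs_le.mpr ⟨by linarith [(hQ01 n i j).1], (hQ01 n i j).2⟩) (hπbd j)
          _ = 2 := by norm_num
      exact mul_le_mul_of_nonneg_right hb2 (hPnonneg n)
    have hdiff_summable : ∀ j, Summable fun n : ℕ => ((Q ^ n) i j - π j) * P n := by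
      intro j
      apply Summable.of_abs
      have : (fun n : ℕ => |((Q ^ n) i j - π j) * P n|)
          = fun n : ℕ => |(Q ^ n) i j - π j| * P n := by
        funext n; rw [abs_mul, abs_of_nonneg (hPnonneg n)]
      rw [this]; exact habs_summable j
    have hpt : ∀ j, p i j t - π j = ∑' n : ℕ, ((Q ^ n) i j - π j) * P n := by
      intro j
      have h1 : π j = ∑' n : ℕ, π j * P n := by rw [tsum_mul_left, hPtsum, mul_one]
      calc p i j t - π j = (∑' n : ℕ, (Q ^ n) i j * P n) - ∑' n : ℕ, π j * P n := by
            rw [hp, ← h1]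
        _ = ∑' n : ℕ, ((Q ^ n) i j * P n - π j * P n) :=
            (Summable.tsum_sub (hQsummable j) (hPsummable.mul_left (π j))).symm
        _ = ∑' n : ℕ, ((Q ^ n) i j - π j) * P n := by
            congr 1; funext n; ring
    set g : ℕ → ℝ := fun n => tvDist (fun j => (Q ^ n) i j) π * P n with hg
    have hg_nonneg : ∀ n, 0 ≤ g n := by
      intro n
      refine mul_nonneg (mul_nonneg (by norm_num) ?_) (hPnonneg n)
      exact Finset.sum_nonneg fun j _ => abs_nonneg _
    have hg_le : ∀ n, g n ≤ c₁ * Real.exp (-(n : ℝ) / (Real.exp 1 * ℓ)) * P n :=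
      fun n => mul_le_mul_of_nonneg_right (hgeo i n) (hPnonneg n)
    have hexp_le_one : ∀ x : ℝ, 0 ≤ x → Real.exp (-x / (Real.exp 1 * ℓ)) ≤ 1 := by
      intro x hx
      rw [← Real.exp_zero]
      apply Real.exp_le_exp.mpr
      apply div_nonpos_of_nonpos_of_nonneg (by linarith) (by positivity)
    have hg_le1 : ∀ n, g n ≤ c₁ * P n := by
      intro n
      calc g n ≤ c₁ * Real.exp (-(n : ℝ) / (Real.exp 1 * ℓ)) * P n := hg_le n
        _ ≤ c₁ * 1 * P n := by
            apply mul_le_mul_of_nonneg_right _ (hPnonneg n)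
            exact mul_le_mul_of_nonneg_left (hexp_le_one n (Nat.cast_nonneg n)) hc₁.le
        _ = c₁ * P n := by ring
    have hg_summable : Summable g :=
      Summable.of_nonneg_of_le hg_nonneg hg_le1 (hPsummable.mul_left c₁)
    have htv_le : tvDist (fun j => p i j t) π ≤ ∑' n, g n := by
      have step : ∀ j, |p i j t - π j| ≤ ∑' n : ℕ, |(Q ^ n) i j - π j| * P n := by
        intro j
        rw [hpt j]
        have heq : (fun n : ℕ => ‖((Q ^ n) i j - π j) * P n‖)
            = fun n : ℕ => |(Q ^ n) i j - π j| * P n := by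
          funext n; rw [Real.norm_eq_abs, abs_mul, abs_of_nonneg (hPnonneg n)]
        have habs2 : Summable fun n : ℕ => ‖((Q ^ n) i j - π j) * P n‖ := by
          rw [heq]; exact habs_summable j
        have hnn := norm_tsum_le_tsum_norm habs2
        rw [heq, Real.norm_eq_abs] at hnn
        exact hnn
      calc tvDist (fun j => p i j t) π = (1/2) * ∑ j, |p i j t - π j| := rfl
        _ ≤ (1/2) * ∑ j, ∑' n : ℕ, |(Q ^ n) i j - π j| * P n := by
            apply mul_le_mul_of_nonneg_left (Finset.sum_le_sum fun j _ => step j) (by norm_num)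
        _ = (1/2) * ∑' n : ℕ, ∑ j, |(Q ^ n) i j - π j| * P n := by
            rw [← Summable.tsum_finsetSum fun j _ => habs_summable j]
        _ = ∑' n, g n := by
            have h2g : (fun n : ℕ => ∑ j, |(Q ^ n) i j - π j| * P n) = fun n => 2 * g n := by
              funext n
              rw [← Finset.sum_mul, hg]
              simp only [tvDist]
              ring
            rw [h2g, tsum_mul_left]
            ring
    have hKsub : ∑ n ∈ K, g n + ∑' n : {x : ℕ // x ∉ K}, g n = ∑' n, g n :=
      Summable.sum_add_tsum_compl hg_summable
    have part1 : ∑ n ∈ K, g n ≤ c₁ * (Cβ / t ^ β) := by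
      have hPK : ∑ n ∈ K, P n ≤ Cβ / t ^ β := by
        have h1 : ∑ n ∈ K, P n = (∑ n ∈ K, μ {ω | N t ω = n}).toReal :=
          (ENNReal.toReal_sum fun n _ => hPfin n).symm
        have h2 : ∑ n ∈ K, μ {ω | N t ω = n} = μ (⋃ n ∈ K, {ω | N t ω = n}) :=
          (measure_biUnion_finset (fun a _ b _ hab => hdisj hab) fun n _ => hAmeas n).symm
        have h3 : μ (⋃ n ∈ K, {ω | N t ω = n})
            ≤ μ {ω | (N t ω : ℝ) ≤ θ * t ^ β / Real.Gamma (1 + β)} := by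
          apply measure_mono
          intro ω hω
          simp only [Set.mem_iUnion, Set.mem_setOf_eq] at hω ⊢
          obtain ⟨n, hn, hωn⟩ := hω
          rw [hωn]
          rw [hK, Finset.mem_range, Nat.lt_succ_iff] at hn
          exact (Nat.le_floor_iff hmpos.le).mp hn
        calc ∑ n ∈ K, P n = (μ (⋃ n ∈ K, {ω | N t ω = n})).toReal := by rw [h1, h2]
          _ ≤ (μ {ω | (N t ω : ℝ) ≤ θ * t ^ β / Real.Gamma (1 + β)}).toReal :=
              ENNReal.toReal_mono (measure_ne_top μ _) h3
          _ ≤ Cβ / t ^ β := hNtail t ht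
      calc ∑ n ∈ K, g n ≤ ∑ n ∈ K, c₁ * P n := Finset.sum_le_sum fun n _ => hg_le1 n
        _ = c₁ * ∑ n ∈ K, P n := by rw [Finset.mul_sum]
        _ ≤ c₁ * (Cβ / t ^ β) := mul_le_mul_of_nonneg_left hPK hc₁.le
    have part2 : ∑' n : {x : ℕ // x ∉ K}, g n
        ≤ c₁ * ((Real.exp 1 * Real.Gamma (1 + β) / θ * ℓ) / t ^ β) := by
      have hmn : ∀ n : ℕ, n ∉ K → m ≤ (n : ℝ) := by
        intro n hn
        rw [hK, Finset.mem_range, not_lt] at hn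
        calc m ≤ (⌊m⌋₊ : ℝ) + 1 := (Nat.lt_floor_add_one m).le
          _ ≤ (n : ℝ) := by exact_mod_cast hn
      have hgb : ∀ n : {x : ℕ // x ∉ K},
          g n ≤ (c₁ * Real.exp (-m / (Real.exp 1 * ℓ))) * P n := by
        rintro ⟨n, hn⟩
        calc g n ≤ c₁ * Real.exp (-(n : ℝ) / (Real.exp 1 * ℓ)) * P n := hg_le n
          _ ≤ (c₁ * Real.exp (-m / (Real.exp 1 * ℓ))) * P n := by
              apply mul_le_mul_of_nonneg_right _ (hPnonneg n)
              apply mul_le_mul_of_nonneg_left _ hc₁.le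
              exact Real.exp_le_exp.mpr
                ((div_le_div_iff_of_pos_right (by positivity)).mpr (neg_le_neg (hmn n hn)))
      have hPcompl : ∑' n : {x : ℕ // x ∉ K}, P n ≤ 1 := by
        have h := Summable.sum_add_tsum_compl (s := K) hPsummable
        rw [hPtsum] at h
        have h0 : 0 ≤ ∑ n ∈ K, P n := Finset.sum_nonneg fun n _ => hPnonneg n
        have h' : ∑' (n : {x : ℕ // x ∉ K}), P ↑n = ∑' (x : ↑(↑K : Set ℕ)ᶜ), P ↑x := rfl
        linarith
      have hexpm : Real.exp (-m / (Real.exp 1 * ℓ))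
          ≤ (Real.exp 1 * Real.Gamma (1 + β) / θ * ℓ) / t ^ β := by
        have hy : 0 < m / (Real.exp 1 * ℓ) := by positivity
        have h1 : Real.exp (-(m / (Real.exp 1 * ℓ))) ≤ (m / (Real.exp 1 * ℓ))⁻¹ := by
          rw [Real.exp_neg]
          apply inv_anti₀ hy
          linarith [Real.add_one_le_exp (m / (Real.exp 1 * ℓ))]
        have h2 : (m / (Real.exp 1 * ℓ))⁻¹
            = (Real.exp 1 * Real.Gamma (1 + β) / θ * ℓ) / t ^ β := by
          rw [hm]
          field_simp
        rw [neg_div, ← h2]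
        exact h1
      calc ∑' n : {x : ℕ // x ∉ K}, g n
          ≤ ∑' n : {x : ℕ // x ∉ K}, (c₁ * Real.exp (-m / (Real.exp 1 * ℓ))) * P n :=
            Summable.tsum_le_tsum hgb (hg_summable.subtype _) ((hPsummable.mul_left _).subtype _)
        _ = (c₁ * Real.exp (-m / (Real.exp 1 * ℓ))) * ∑' n : {x : ℕ // x ∉ K}, P n :=
            tsum_mul_left
        _ ≤ (c₁ * Real.exp (-m / (Real.exp 1 * ℓ))) * 1 := by
            apply mul_le_mul_of_nonneg_left hPcompl
            positivity
        _ ≤ c₁ * ((Real.exp 1 * Real.Gamma (1 + β) / θ * ℓ) / t ^ β) := by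
            rw [mul_one]
            exact mul_le_mul_of_nonneg_left hexpm hc₁.le
    calc tvDist (fun j => p i j t) π ≤ ∑' n, g n := htv_le
      _ = ∑ n ∈ K, g n + ∑' n : {x : ℕ // x ∉ K}, g n := hKsub.symm
      _ ≤ c₁ * (Cβ / t ^ β) + c₁ * ((Real.exp 1 * Real.Gamma (1 + β) / θ * ℓ) / t ^ β) :=
          add_le_add part1 part2
  -- assemble
  have hsum : ∑ i, tvDist (fun j => p i j t) π ≤ ε := by
    have hCM : Cβ ≤ M := le_max_left _ _
    have hEM : Real.exp 1 * Real.Gamma (1 + β) / θ * ℓ ≤ M := le_max_right _ _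
    calc ∑ i, tvDist (fun j => p i j t) π
        ≤ ∑ _i : 𝒮, (c₁ * (Cβ / t ^ β)
            + c₁ * ((Real.exp 1 * Real.Gamma (1 + β) / θ * ℓ) / t ^ β)) :=
          Finset.sum_le_sum fun i _ => key i
      _ = (Fintype.card 𝒮 : ℝ) * (c₁ * (Cβ / t ^ β)
            + c₁ * ((Real.exp 1 * Real.Gamma (1 + β) / θ * ℓ) / t ^ β)) := by
          rw [Finset.sum_const, Finset.card_univ, nsmul_eq_mul]
      _ ≤ (Fintype.card 𝒮 : ℝ) * (c₁ * (M / t ^ β) + c₁ * (M / t ^ β)) := by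
          apply mul_le_mul_of_nonneg_left _ hcard.le
          apply add_le_add
          · exact mul_le_mul_of_nonneg_left ((div_le_div_iff_of_pos_right htβpos).mpr hCM) hc₁.le
          · exact mul_le_mul_of_nonneg_left ((div_le_div_iff_of_pos_right htβpos).mpr hEM) hc₁.le
      _ = ε := by
          rw [htβ, hbase]
          field_simp
          ring
  rw [hTcont]
  by_cases hb : BddBelow {t' : ℝ | ∑ i, tvDist (fun j => p i j t') π ≤ ε}
  · exact csInf_le hb hsum
  · rw [Real.sInf_of_not_bddBelow hb]
    exact ht.le
end

section
/- (Lemma 3.1) Assume the tail assumption holds with some β > 0. Then there exists a uniform positive constant C₀, depending only on β, c₁ and c₂, such that for every integer K ≥ 1 and every t > (max{t₀, (2c₂)^{1/β}}) · K: c₁ K / t^β − C₀ K² / t^{2β} ≤ P{N(t) < K} ≤ c₂ K^{1+β} / t^β + C₀ K^{1+2β} / t^{2β}. -/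
open MeasureTheory ProbabilityTheory Filter Finset
open scoped ENNReal

/-- Quadratic (second-order Bonferroni) bound: `(1-p)^n ≤ 1 - n p + n² p² / 2`. -/
lemma quad_pow_bound (p : ℝ) (hp0 : 0 ≤ p) (hp1 : p ≤ 1) :
    ∀ n : ℕ, (1 - p) ^ n ≤ 1 - (n : ℝ) * p + (n : ℝ) ^ 2 * p ^ 2 / 2 := by
  intro n
  induction n with
  | zero => norm_num
  | succ n ih =>
      have h1 : (0:ℝ) ≤ 1 - p := by linarith
      have h3 : (1 - p) ^ n * (1 - p) ≤ (1 - (n:ℝ) * p + (n:ℝ) ^ 2 * p ^ 2 / 2) * (1 - p) :=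
        mul_le_mul_of_nonneg_right ih h1
      have h2 : (1 - p) ^ (n + 1) = (1 - p) ^ n * (1 - p) := by ring
      have hn : (0:ℝ) ≤ (n : ℝ) := Nat.cast_nonneg n
      have hcube : 0 ≤ (n:ℝ)^2 * p^3 := by positivity
      push_cast
      nlinarith [sq_nonneg p]

/-- Lemma 3.1: under the power-law tail assumption of index `β > 0`,
there is a uniform constant `C₀ > 0` (depending only on `β, c₁, c₂`) so that for every
integer `K ≥ 1` and every `t > max{t₀, (2c₂)^{1/β}} · K`,
`c₁ K / t^β − C₀ K² / t^{2β} ≤ P{N(t) < K} ≤ c₂ K^{1+β} / t^β + C₀ K^{1+2β} / t^{2β}`. -/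
theorem counting_process_tail_bounds
    {Ω : Type*} [MeasurableSpace Ω] (μ : Measure Ω) [IsProbabilityMeasure μ]
    (T : ℕ → Ω → ℝ)
    (hTmeas : ∀ n, Measurable (T n))
    (hTpos : ∀ n, ∀ᵐ ω ∂μ, 0 < T n ω)
    (hTindep : iIndepFun T μ)
    (hTident : ∀ n, IdentDistrib (T n) (T 0) μ μ)
    (Spart : ℕ → Ω → ℝ)
    (hSpart : ∀ n ω, Spart n ω = ∑ k ∈ Finset.range n, T k ω)
    (N : ℝ → Ω → ℕ)
    (hN : ∀ t ω, N t ω = sSup {n : ℕ | Spart n ω ≤ t})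
    -- Tail assumption (Assumption 2.1)
    (β c₁ c₂ t₀ : ℝ)
    (hβ : 0 < β) (hc₁ : 0 < c₁) (hc₂ : 0 < c₂) (ht₀ : 0 < t₀)
    (htail : ∀ t : ℝ, t₀ < t →
      c₁ / t ^ β ≤ (μ {ω | t < T 0 ω}).toReal ∧ (μ {ω | t < T 0 ω}).toReal ≤ c₂ / t ^ β) :
    ∃ C₀ : ℝ, 0 < C₀ ∧ ∀ K : ℕ, 1 ≤ K → ∀ t : ℝ,
      max t₀ ((2 * c₂) ^ (1 / β)) * (K : ℝ) < t →
      c₁ * (K : ℝ) / t ^ β - C₀ * (K : ℝ) ^ 2 / t ^ (2 * β)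
          ≤ (μ {ω | N t ω < K}).toReal ∧
      (μ {ω | N t ω < K}).toReal
          ≤ c₂ * (K : ℝ) ^ ((1 : ℝ) + β) / t ^ β + C₀ * (K : ℝ) ^ ((1 : ℝ) + 2 * β) / t ^ (2 * β) := by
  refine ⟨c₂ ^ 2 / 2, by positivity, ?_⟩
  intro K hK t ht
  -- basic positivity facts
  have hK0 : (0:ℝ) < K := by exact_mod_cast Nat.lt_of_lt_of_le Nat.zero_lt_one hK
  have hK1 : (1:ℝ) ≤ K := by exact_mod_cast hK
  have ht₀K : t₀ * K < t := lt_of_le_of_lt (by nlinarith [le_max_left t₀ ((2 * c₂) ^ (1 / β))]) ht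
  have ht₀t : t₀ < t := lt_of_le_of_lt (by nlinarith) ht₀K
  have htpos : (0:ℝ) < t := lt_trans ht₀ ht₀t
  have ht₀tK : t₀ < t / K := by
    rw [lt_div_iff₀ hK0]; exact ht₀K
  have htKpos : (0:ℝ) < t / K := lt_trans ht₀ ht₀tK
  have htβ : (0:ℝ) < t ^ β := Real.rpow_pos_of_pos htpos β
  have htβK : (0:ℝ) < (t / K) ^ β := Real.rpow_pos_of_pos htKpos β
  -- the a.s. positivity event
  set G : Set Ω := {ω | ∀ n, 0 < T n ω} with hGdef
  have hGc : μ Gᶜ = 0 := by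
    have hG : ∀ᵐ ω ∂μ, ∀ n, 0 < T n ω := ae_all_iff.2 hTpos
    simpa [hGdef, Set.compl_setOf] using (ae_iff.mp hG)
  -- monotonicity and nonnegativity of partial sums on G
  have hSnonneg : ∀ ω ∈ G, ∀ n, 0 ≤ Spart n ω := by
    intro ω hω n
    rw [hSpart]
    exact Finset.sum_nonneg fun k _ => (hω k).le
  have hSmono : ∀ ω ∈ G, ∀ m n : ℕ, m ≤ n → Spart m ω ≤ Spart n ω := by
    intro ω hω m n hmn
    rw [hSpart, hSpart]
    exact Finset.sum_le_sum_of_subset_of_nonneg (Finset.range_subset_range.2 hmn)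
      (fun k _ _ => (hω k).le)
  -- pointwise lemma A : on G, `t < Spart K` implies `N t < K`
  have hA : ∀ ω ∈ G, t < Spart K ω → N t ω < K := by
    intro ω hω hlt
    rw [hN]
    set S : Set ℕ := {n : ℕ | Spart n ω ≤ t} with hSdef
    have h0S : (0:ℕ) ∈ S := by
      simp only [hSdef, Set.mem_setOf_eq, hSpart]
      simpa using htpos.le
    have hltK : ∀ n ∈ S, n < K := by
      intro n hn
      by_contra h
      push_neg at h
      exact absurd (hSmono ω hω K n h) (by simp only [hSdef, Set.mem_setOf_eq] at hn; linarith)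
    have hbdd : BddAbove S := ⟨K, fun n hn => (hltK n hn).le⟩
    exact hltK _ (Nat.sSup_mem ⟨0, h0S⟩ hbdd)
  -- pointwise lemma B : on G, `N t < K` implies `t < Spart K` or all partial sums `≤ t`
  have hB : ∀ ω ∈ G, N t ω < K → t < Spart K ω ∨ ∀ n, Spart n ω ≤ t := by
    intro ω hω hNlt
    by_contra h
    push_neg at h
    obtain ⟨hK', n, hn⟩ := h
    set S : Set ℕ := {n : ℕ | Spart n ω ≤ t} with hSdef
    have hbdd : BddAbove S := by
      refine ⟨n, fun m hm => ?_⟩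
      by_contra hmn
      push_neg at hmn
      exact absurd (hSmono ω hω n m hmn.le)
        (by simp only [hSdef, Set.mem_setOf_eq] at hm; linarith)
    have hKS : K ∈ S := hK'
    have hle : K ≤ sSup S := le_csSup hbdd hKS
    rw [hN t ω, ← hSdef] at hNlt
    omega
  -- probabilities of single-variable tails
  set pE : ℝ≥0∞ := μ {ω | t < T 0 ω} with hpEdef
  set p : ℝ := pE.toReal with hpdef
  have hp_lb : c₁ / t ^ β ≤ p := (htail t ht₀t).1
  have hp_ub : p ≤ c₂ / t ^ β := (htail t ht₀t).2
  have hp0 : 0 ≤ p := ENNReal.toReal_nonneg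
  have hpE_le_one : pE ≤ 1 := prob_le_one
  have hp1 : p ≤ 1 := by
    rw [hpdef]
    calc pE.toReal ≤ (1:ℝ≥0∞).toReal := ENNReal.toReal_mono ENNReal.one_ne_top hpE_le_one
    _ = 1 := by simp
  have hpE_ne_zero : pE ≠ 0 := by
    intro h
    have hz : p = 0 := by rw [hpdef, h, ENNReal.toReal_zero]
    have h2 : 0 < c₁ / t ^ β := div_pos hc₁ htβ
    linarith
  -- product formula
  have hcompl : {ω | T 0 ω ≤ t} = {ω | t < T 0 ω}ᶜ := by
    ext ω; simp [not_lt]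
  have hprod : ∀ (M : ℕ) (s : ℝ),
      μ (⋂ i ∈ Finset.range M, T i ⁻¹' Set.Iic s) = (μ (T 0 ⁻¹' Set.Iic s)) ^ M := by
    intro M s
    have h := hTindep.measure_inter_preimage_eq_mul (Finset.range M)
      (sets := fun _ => Set.Iic s) (fun i _ => measurableSet_Iic)
    rw [h, Finset.prod_congr rfl
      (fun i _ => (hTident i).measure_mem_eq (measurableSet_Iic (a := s)))]
    simp
  set rE : ℝ≥0∞ := μ (T 0 ⁻¹' Set.Iic t) with hrEdef
  have hrE_eq : rE = 1 - pE := by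
    have hms : MeasurableSet {ω | t < T 0 ω} := (hTmeas 0) measurableSet_Ioi
    have hc2 : T 0 ⁻¹' Set.Iic t = {ω | t < T 0 ω}ᶜ := by ext ω; simp [not_lt]
    rw [hrEdef, hc2, prob_compl_eq_one_sub hms, hpEdef]
  have hrE_lt_one : rE < 1 := by
    rw [hrE_eq]
    exact ENNReal.sub_lt_self ENNReal.one_ne_top one_ne_zero hpE_ne_zero
  have hrE_toReal : rE.toReal = 1 - p := by
    rw [hrE_eq, hpdef, ENNReal.toReal_sub_of_le hpE_le_one ENNReal.one_ne_top, ENNReal.toReal_one]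
  -- the exceptional set Z is null
  set Z : Set Ω := {ω | ∀ n, Spart n ω ≤ t} with hZdef
  have hTleS : ∀ ω ∈ G, ∀ i, T i ω ≤ Spart (i + 1) ω := by
    intro ω hω i
    have h1 : Spart (i + 1) ω = Spart i ω + T i ω := by
      rw [hSpart, hSpart, Finset.sum_range_succ]
    have := hSnonneg ω hω i
    linarith
  have hZnull : μ Z = 0 := by
    have hZG : μ (Z ∩ G) = 0 := by
      have hle : ∀ M : ℕ, μ (Z ∩ G) ≤ rE ^ M := by
        intro M
        have hsub : Z ∩ G ⊆ ⋂ i ∈ Finset.range M, T i ⁻¹' Set.Iic t := by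
          intro ω ⟨hωZ, hωG⟩
          simp only [Set.mem_iInter, Set.mem_preimage, Set.mem_Iic, Finset.mem_range]
          intro i _
          exact le_trans (hTleS ω hωG i) (hωZ (i + 1))
        exact (measure_mono hsub).trans_eq (hprod M t)
      have htends : Tendsto (fun M : ℕ => rE ^ M) atTop (nhds 0) :=
        ENNReal.tendsto_pow_atTop_nhds_zero_of_lt_one hrE_lt_one
      exact le_antisymm (ge_of_tendsto' htends hle) zero_le
    refine le_antisymm ?_ zero_le
    calc μ Z ≤ μ (Z ∩ G) + μ (Z \ G) := measure_le_inter_add_diff μ Z G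
    _ ≤ 0 + μ Gᶜ := add_le_add hZG.le (measure_mono (Set.diff_subset_compl Z G))
    _ = 0 := by rw [hGc, zero_add]
  ------------------------------------------------------------------
  -- UPPER BOUND
  ------------------------------------------------------------------
  set qE : ℝ≥0∞ := μ {ω | t / K < T 0 ω} with hqEdef
  set q : ℝ := qE.toReal with hqdef
  have hq_ub : q ≤ c₂ / (t / K) ^ β := (htail (t / K) ht₀tK).2
  have hq0 : 0 ≤ q := ENNReal.toReal_nonneg
  have hupper_meas : μ {ω | N t ω < K} ≤ (K : ℝ≥0∞) * qE := by
    have hsub1 : {ω | N t ω < K} ⊆ ({ω | t < Spart K ω} ∪ Z) ∪ Gᶜ := by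
      intro ω hω
      by_cases hωG : ω ∈ G
      · rcases hB ω hωG hω with h | h
        · exact Or.inl (Or.inl h)
        · exact Or.inl (Or.inr h)
      · exact Or.inr hωG
    have hsub2 : {ω | t < Spart K ω} ⊆ (⋃ i ∈ Finset.range K, {ω | t / K < T i ω}) ∪ Gᶜ := by
      intro ω hω
      by_cases hωG : ω ∈ G
      · left
        simp only [Set.mem_iUnion, Set.mem_setOf_eq, Finset.mem_range]
        by_contra h
        push_neg at h
        have hsum : Spart K ω ≤ ∑ _i ∈ Finset.range K, t / K := by
          rw [hSpart]
          exact Finset.sum_le_sum fun i hi => h i (Finset.mem_range.mp hi)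
        rw [Finset.sum_const, Finset.card_range, nsmul_eq_mul] at hsum
        rw [mul_div_cancel₀ t (ne_of_gt hK0)] at hsum
        exact absurd hsum (not_le.mpr hω)
      · exact Or.inr hωG
    have hUnion : μ (⋃ i ∈ Finset.range K, {ω | t / K < T i ω}) ≤ (K : ℝ≥0∞) * qE := by
      calc μ (⋃ i ∈ Finset.range K, {ω | t / K < T i ω})
          ≤ ∑ i ∈ Finset.range K, μ {ω | t / K < T i ω} := measure_biUnion_finset_le _ _
      _ = ∑ _i ∈ Finset.range K, qE := by
          refine Finset.sum_congr rfl fun i _ => ?_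
          rw [hqEdef]
          exact (hTident i).measure_mem_eq (measurableSet_Ioi (a := t / K))
      _ = (K : ℝ≥0∞) * qE := by rw [Finset.sum_const, Finset.card_range, nsmul_eq_mul]
    calc μ {ω | N t ω < K} ≤ μ (({ω | t < Spart K ω} ∪ Z) ∪ Gᶜ) := measure_mono hsub1
    _ ≤ μ ({ω | t < Spart K ω} ∪ Z) + μ Gᶜ := measure_union_le _ _
    _ ≤ (μ {ω | t < Spart K ω} + μ Z) + μ Gᶜ :=
        add_le_add_left (measure_union_le _ _) _
    _ = μ {ω | t < Spart K ω} := by rw [hZnull, hGc, add_zero, add_zero]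
    _ ≤ μ ((⋃ i ∈ Finset.range K, {ω | t / K < T i ω}) ∪ Gᶜ) := measure_mono hsub2
    _ ≤ μ (⋃ i ∈ Finset.range K, {ω | t / K < T i ω}) + μ Gᶜ := measure_union_le _ _
    _ = μ (⋃ i ∈ Finset.range K, {ω | t / K < T i ω}) := by rw [hGc, add_zero]
    _ ≤ (K : ℝ≥0∞) * qE := hUnion
  have hupper : (μ {ω | N t ω < K}).toReal ≤ (K : ℝ) * q := by
    have hfin : (K : ℝ≥0∞) * qE ≠ ⊤ :=
      ENNReal.mul_ne_top (ENNReal.natCast_ne_top K) (measure_ne_top μ _)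
    calc (μ {ω | N t ω < K}).toReal ≤ ((K : ℝ≥0∞) * qE).toReal :=
          ENNReal.toReal_mono hfin hupper_meas
    _ = (K : ℝ) * q := by rw [ENNReal.toReal_mul, ENNReal.toReal_natCast]
  ------------------------------------------------------------------
  -- LOWER BOUND
  ------------------------------------------------------------------
  have hlower_meas : 1 - rE ^ K ≤ μ {ω | N t ω < K} := by
    set U : Set Ω := ⋃ i ∈ Finset.range K, {ω | t < T i ω} with hUdef
    have hUcompl : U = (⋂ i ∈ Finset.range K, T i ⁻¹' Set.Iic t)ᶜ := by
      rw [hUdef]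
      ext ω
      simp [not_forall, not_le]
    have hUmeas : μ U = 1 - rE ^ K := by
      rw [hUcompl, prob_compl_eq_one_sub, hprod K t]
      exact MeasurableSet.biInter (Finset.countable_toSet _)
        (fun i _ => (hTmeas i) measurableSet_Iic)
    have hsub : U ∩ G ⊆ {ω | N t ω < K} := by
      intro ω ⟨hωU, hωG⟩
      simp only [hUdef, Set.mem_iUnion, Finset.mem_range, Set.mem_setOf_eq] at hωU
      obtain ⟨i, hiK, hi⟩ := hωU
      have hTiS : T i ω ≤ Spart K ω := by
        rw [hSpart]
        exact Finset.single_le_sum (fun k _ => (hωG k).le) (Finset.mem_range.mpr hiK)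
      exact hA ω hωG (lt_of_lt_of_le hi hTiS)
    calc 1 - rE ^ K = μ U := hUmeas.symm
    _ ≤ μ (U ∩ G) + μ (U \ G) := measure_le_inter_add_diff μ U G
    _ ≤ μ {ω | N t ω < K} + μ Gᶜ :=
        add_le_add (measure_mono hsub) (measure_mono (Set.diff_subset_compl U G))
    _ = μ {ω | N t ω < K} := by rw [hGc, add_zero]
  have hlower : 1 - (1 - p) ^ K ≤ (μ {ω | N t ω < K}).toReal := by
    have h1 : (1 - rE ^ K : ℝ≥0∞).toReal = 1 - (1 - p) ^ K := by
      rw [ENNReal.toReal_sub_of_le (pow_le_one' hrE_lt_one.le K) ENNReal.one_ne_top,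
        ENNReal.toReal_pow, hrE_toReal, ENNReal.toReal_one]
    calc 1 - (1 - p) ^ K = (1 - rE ^ K : ℝ≥0∞).toReal := h1.symm
    _ ≤ (μ {ω | N t ω < K}).toReal := ENNReal.toReal_mono (measure_ne_top μ _) hlower_meas
  ------------------------------------------------------------------
  -- NUMERICAL CONCLUSIONS
  ------------------------------------------------------------------
  have ht2β : t ^ (2 * β) = (t ^ β) ^ 2 := by
    rw [mul_comm, Real.rpow_mul htpos.le, ← Real.rpow_natCast (t ^ β) 2]
    norm_num
  have hKβ : (K : ℝ) ^ ((1:ℝ) + β) = (K : ℝ) * (K : ℝ) ^ β := by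
    rw [Real.rpow_add hK0, Real.rpow_one]
  have hKβpos : (0:ℝ) < (K : ℝ) ^ β := Real.rpow_pos_of_pos hK0 β
  have hK2βpos : (0:ℝ) < (K : ℝ) ^ ((1:ℝ) + 2 * β) := Real.rpow_pos_of_pos hK0 _
  have ht2βpos : (0:ℝ) < t ^ (2 * β) := Real.rpow_pos_of_pos htpos _
  constructor
  · -- lower bound
    have hquad : (1 - p) ^ K ≤ 1 - (K : ℝ) * p + (K : ℝ) ^ 2 * p ^ 2 / 2 :=
      quad_pow_bound p hp0 hp1 K
    have hKp : c₁ * (K : ℝ) / t ^ β ≤ (K : ℝ) * p := by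
      calc c₁ * (K : ℝ) / t ^ β = (K : ℝ) * (c₁ / t ^ β) := by ring
      _ ≤ (K : ℝ) * p := mul_le_mul_of_nonneg_left hp_lb hK0.le
    have hp2 : p ^ 2 ≤ (c₂ / t ^ β) ^ 2 := by
      exact pow_le_pow_left₀ hp0 hp_ub 2
    have hKp2 : (K : ℝ) ^ 2 * p ^ 2 / 2 ≤ c₂ ^ 2 / 2 * (K : ℝ) ^ 2 / t ^ (2 * β) := by
      rw [ht2β]
      rw [div_pow] at hp2
      have h := mul_le_mul_of_nonneg_left hp2 (by positivity : (0:ℝ) ≤ (K : ℝ) ^ 2 / 2)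
      calc (K : ℝ) ^ 2 * p ^ 2 / 2 = (K : ℝ) ^ 2 / 2 * p ^ 2 := by ring
      _ ≤ (K : ℝ) ^ 2 / 2 * (c₂ ^ 2 / (t ^ β) ^ 2) := h
      _ = c₂ ^ 2 / 2 * (K : ℝ) ^ 2 / (t ^ β) ^ 2 := by ring
    linarith
  · -- upper bound
    have hq_ub' : q ≤ c₂ * (K : ℝ) ^ β / t ^ β := by
      have h1 : (t / K) ^ β = t ^ β / (K : ℝ) ^ β := Real.div_rpow htpos.le hK0.le β
      calc q ≤ c₂ / (t / K) ^ β := hq_ub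
      _ = c₂ * (K : ℝ) ^ β / t ^ β := by rw [h1]; field_simp
    have h2 : (K : ℝ) * q ≤ c₂ * (K : ℝ) ^ ((1:ℝ) + β) / t ^ β := by
      rw [hKβ]
      calc (K : ℝ) * q ≤ (K : ℝ) * (c₂ * (K : ℝ) ^ β / t ^ β) :=
            mul_le_mul_of_nonneg_left hq_ub' hK0.le
      _ = c₂ * ((K : ℝ) * (K : ℝ) ^ β) / t ^ β := by ring
    have h3 : (0:ℝ) ≤ c₂ ^ 2 / 2 * (K : ℝ) ^ ((1:ℝ) + 2 * β) / t ^ (2 * β) := by positivity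
    linarith
end

section
/- (Key decomposition inequality) Let Q be the transition matrix of an irreducible aperiodic Markov chain on a finite set 𝒮 with unique invariant distribution π. Then for every state i, every time t ≥ 0 and all integers 0 ≤ M ≤ L: ‖p_{i,·}(t) − π‖ ≤ P{N(t) < M} + ‖q^{(M)}_{i,·} − π‖ + ‖q^{(L)}_{i,·} − π‖ · P{N(t) > L}. -/
open MeasureTheory ProbabilityTheory Filter Finset

lemma tvDist_nonneg {𝒮 : Type*} [Fintype 𝒮] (f g : 𝒮 → ℝ) : 0 ≤ tvDist f g := by
  unfold tvDist
  positivity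

/-- contraction of TV distance under a stochastic matrix -/
lemma tvDist_mul_le {𝒮 : Type*} [Fintype 𝒮] (Q : Matrix 𝒮 𝒮 ℝ)
    (hQnonneg : ∀ i j, 0 ≤ Q i j) (hQrow : ∀ i, ∑ j, Q i j = 1)
    (f g : 𝒮 → ℝ) :
    tvDist (fun j => ∑ k, f k * Q k j) (fun j => ∑ k, g k * Q k j) ≤ tvDist f g := by
  unfold tvDist
  have h : ∀ j, |(∑ k, f k * Q k j) - ∑ k, g k * Q k j| ≤ ∑ k, |f k - g k| * Q k j := by
    intro j
    rw [← Finset.sum_sub_distrib]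
    refine (Finset.abs_sum_le_sum_abs _ _).trans ?_
    refine Finset.sum_le_sum fun k _ => ?_
    rw [← sub_mul, abs_mul, abs_of_nonneg (hQnonneg k j)]
  have h2 : ∑ j, ∑ k, |f k - g k| * Q k j = ∑ k, |f k - g k| := by
    rw [Finset.sum_comm]
    refine Finset.sum_congr rfl fun k _ => ?_
    rw [← Finset.mul_sum, hQrow k, mul_one]
  have h3 : (∑ j, |(∑ k, f k * Q k j) - ∑ k, g k * Q k j|) ≤ ∑ k, |f k - g k| := by
    rw [← h2]; exact Finset.sum_le_sum fun j _ => h j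
  nlinarith [h3]

/-- key decomposition inequality: for every state `i`, every `t ≥ 0`
and all integers `0 ≤ M ≤ L`,
`‖p_{i,·}(t) − π‖ ≤ P{N(t) < M} + ‖q^{(M)}_{i,·} − π‖ + ‖q^{(L)}_{i,·} − π‖ · P{N(t) > L}`. -/
theorem tv_decomposition_inequality
    {𝒮 : Type*} [Fintype 𝒮] [DecidableEq 𝒮] [Nonempty 𝒮]
    (Q : Matrix 𝒮 𝒮 ℝ)
    (hQnonneg : ∀ i j, 0 ≤ Q i j)
    (hQrow : ∀ i, ∑ j, Q i j = 1)
    (π : 𝒮 → ℝ)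
    (hconv : ∀ i j, Tendsto (fun n : ℕ => (Q ^ n) i j) atTop (nhds (π j)))
    {Ω : Type*} [MeasurableSpace Ω] (μ : Measure Ω) [IsProbabilityMeasure μ]
    (T : ℕ → Ω → ℝ)
    (hTmeas : ∀ n, Measurable (T n))
    (hTpos : ∀ n, ∀ᵐ ω ∂μ, 0 < T n ω)
    (hTindep : iIndepFun T μ)
    (hTident : ∀ n, IdentDistrib (T n) (T 0) μ μ)
    (Spart : ℕ → Ω → ℝ)
    (hSpart : ∀ n ω, Spart n ω = ∑ k ∈ Finset.range n, T k ω)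
    (N : ℝ → Ω → ℕ)
    (hN : ∀ t ω, N t ω = sSup {n : ℕ | Spart n ω ≤ t})
    (p : 𝒮 → 𝒮 → ℝ → ℝ)
    (hp : ∀ i j t, p i j t = ∑' n : ℕ, (Q ^ n) i j * (μ {ω | N t ω = n}).toReal) :
    ∀ (i : 𝒮) (t : ℝ), 0 ≤ t → ∀ (M L : ℕ), M ≤ L →
      tvDist (fun j => p i j t) π ≤
        (μ {ω | N t ω < M}).toReal
        + tvDist (fun j => (Q ^ M) i j) π
        + tvDist (fun j => (Q ^ L) i j) π * (μ {ω | L < N t ω}).toReal := by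
  intro i t ht M L hML
  -- basic facts on powers of Q
  have hQpow_nonneg : ∀ n (a b : 𝒮), 0 ≤ (Q ^ n) a b := by
    intro n
    induction n with
    | zero => intro a b; by_cases h : a = b <;> simp [pow_zero, Matrix.one_apply, h]
    | succ n ih =>
      intro a b
      rw [pow_succ, Matrix.mul_apply]
      exact Finset.sum_nonneg fun k _ => mul_nonneg (ih a k) (hQnonneg k b)
  have hQpow_row : ∀ n (a : 𝒮), ∑ j, (Q ^ n) a j = 1 := by
    intro n
    induction n with
    | zero => intro a; simp [pow_zero, Matrix.one_apply]
    | succ n ih =>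
      intro a
      simp only [pow_succ, Matrix.mul_apply]
      rw [Finset.sum_comm]
      calc ∑ k, ∑ j, (Q ^ n) a k * Q k j = ∑ k, (Q ^ n) a k * ∑ j, Q k j := by
            simp [Finset.mul_sum]
        _ = 1 := by simp only [hQrow, mul_one]; exact ih a
  have hQpow_le_one : ∀ n (a b : 𝒮), (Q ^ n) a b ≤ 1 := by
    intro n a b
    calc (Q ^ n) a b ≤ ∑ j, (Q ^ n) a j :=
          Finset.single_le_sum (fun j _ => hQpow_nonneg n a j) (Finset.mem_univ b)
      _ = 1 := hQpow_row n a
  -- facts about π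
  have hπnonneg : ∀ j, 0 ≤ π j := fun j =>
    ge_of_tendsto (hconv (Classical.arbitrary 𝒮) j)
      (Eventually.of_forall fun n => hQpow_nonneg n _ j)
  have hπsum : ∑ j, π j = 1 := by
    have h1 : Tendsto (fun n : ℕ => ∑ j, (Q ^ n) (Classical.arbitrary 𝒮) j) atTop
        (nhds (∑ j, π j)) := tendsto_finset_sum _ fun j _ => hconv _ j
    have h2 : Tendsto (fun n : ℕ => ∑ j, (Q ^ n) (Classical.arbitrary 𝒮) j) atTop
        (nhds 1) := by
      simp only [hQpow_row]; exact tendsto_const_nhds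
    exact tendsto_nhds_unique h1 h2
  have hπinv : ∀ j, π j = ∑ k, π k * Q k j := by
    intro j
    set i0 := Classical.arbitrary 𝒮
    have h1 : Tendsto (fun n : ℕ => (Q ^ (n + 1)) i0 j) atTop (nhds (π j)) :=
      (hconv i0 j).comp (tendsto_add_atTop_nat 1)
    have h2 : Tendsto (fun n : ℕ => (Q ^ (n + 1)) i0 j) atTop
        (nhds (∑ k, π k * Q k j)) := by
      have : ∀ n : ℕ, (Q ^ (n + 1)) i0 j = ∑ k, (Q ^ n) i0 k * Q k j := by
        intro n; rw [pow_succ, Matrix.mul_apply]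
      simp only [this]
      exact tendsto_finset_sum _ fun k _ => (hconv i0 k).mul_const _
    exact tendsto_nhds_unique h1 h2
  -- the distance sequence
  set d : ℕ → ℝ := fun n => tvDist (fun j => (Q ^ n) i j) π with hd
  have hd_nonneg : ∀ n, 0 ≤ d n := fun n => tvDist_nonneg _ _
  have hd_le_one : ∀ n, d n ≤ 1 := by
    intro n
    have : ∑ x, |(Q ^ n) i x - π x| ≤ 2 := by
      calc ∑ x, |(Q ^ n) i x - π x| ≤ ∑ x, ((Q ^ n) i x + π x) := by
            refine Finset.sum_le_sum fun x _ => ?_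
            refine (abs_sub _ _).trans ?_
            rw [abs_of_nonneg (hQpow_nonneg n i x), abs_of_nonneg (hπnonneg x)]
        _ = 2 := by rw [Finset.sum_add_distrib, hQpow_row n i, hπsum]; norm_num
    show (1/2 : ℝ) * ∑ x, |(Q ^ n) i x - π x| ≤ 1
    linarith
  have hd_anti : ∀ m n : ℕ, m ≤ n → d n ≤ d m := by
    have hstep : ∀ n, d (n + 1) ≤ d n := by
      intro n
      have h1 : (fun j => (Q ^ (n + 1)) i j) = fun j => ∑ k, (Q ^ n) i k * Q k j := by
        funext j; rw [pow_succ, Matrix.mul_apply]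
      have h2 : π = fun j => ∑ k, π k * Q k j := funext hπinv
      calc d (n + 1) = tvDist (fun j => ∑ k, (Q ^ n) i k * Q k j)
              (fun j => ∑ k, π k * Q k j) := by
            show tvDist (fun j => (Q ^ (n+1)) i j) π = _
            rw [h1, ← h2]
        _ ≤ tvDist (fun j => (Q ^ n) i j) π := tvDist_mul_le Q hQnonneg hQrow _ _
        _ = d n := rfl
    intro m n hmn
    exact antitone_nat_of_succ_le hstep hmn
  -- measurability of the counting process
  have hSm : ∀ n, Measurable (Spart n) := by
    intro n
    have h : Spart n = fun ω => ∑ k ∈ Finset.range n, T k ω := funext (hSpart n)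
    rw [h]
    exact Finset.measurable_sum _ fun k _ => hTmeas k
  have hB : ∀ n : ℕ, MeasurableSet {ω | Spart n ω ≤ t} := fun n =>
    measurableSet_le (hSm n) measurable_const
  have hNchar : ∀ k : ℕ, 0 < k →
      {ω | N t ω = k} = {ω | Spart k ω ≤ t} ∩ ⋂ m : ℕ, {ω | Spart (k + 1 + m) ω ≤ t}ᶜ := by
    intro k hk
    ext ω
    simp only [Set.mem_setOf_eq, Set.mem_inter_iff, Set.mem_iInter, Set.mem_compl_iff, hN]
    constructor
    · intro h
      by_cases hbdd : BddAbove {n : ℕ | Spart n ω ≤ t}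
      · have h0mem : (0 : ℕ) ∈ {n : ℕ | Spart n ω ≤ t} := by
          simp only [Set.mem_setOf_eq, hSpart, Finset.range_zero, Finset.sum_empty]; exact ht
        have hmem : k ∈ {n : ℕ | Spart n ω ≤ t} := by
          rw [← h]; exact Nat.sSup_mem ⟨0, h0mem⟩ hbdd
        refine ⟨hmem, fun m hm => ?_⟩
        have h2 : k + 1 + m ≤ sSup {n : ℕ | Spart n ω ≤ t} := le_csSup hbdd hm
        omega
      · have h0 : sSup {n : ℕ | Spart n ω ≤ t} = 0 := by
          rw [csSup_of_not_bddAbove hbdd, csSup_empty]; rfl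
        omega
    · rintro ⟨h1, h2⟩
      have hbdd : BddAbove {n : ℕ | Spart n ω ≤ t} := by
        refine ⟨k, fun m hm => ?_⟩
        by_contra hc
        push_neg at hc
        have hm' : m = k + 1 + (m - (k + 1)) := by omega
        exact h2 (m - (k + 1)) (hm' ▸ hm)
      refine le_antisymm (csSup_le ⟨k, h1⟩ fun m hm => ?_) (le_csSup hbdd h1)
      by_contra hc
      push_neg at hc
      have hm' : m = k + 1 + (m - (k + 1)) := by omega
      exact h2 (m - (k + 1)) (hm' ▸ hm)
  have hNk_meas : ∀ k : ℕ, MeasurableSet {ω | N t ω = k} := by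
    have hpos : ∀ k : ℕ, 0 < k → MeasurableSet {ω | N t ω = k} := by
      intro k hk
      rw [hNchar k hk]
      exact (hB _).inter (MeasurableSet.iInter fun m => (hB _).compl)
    intro k
    rcases Nat.eq_zero_or_pos k with rfl | hk
    · have h : {ω | N t ω = 0} = (⋃ k : ℕ, {ω | N t ω = k + 1})ᶜ := by
        ext ω
        simp only [Set.mem_compl_iff, Set.mem_iUnion, Set.mem_setOf_eq]
        constructor
        · rintro h ⟨k, hk⟩; omega
        · intro h
          by_contra h0
          exact h ⟨N t ω - 1, by omega⟩
      rw [h]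
      exact (MeasurableSet.iUnion fun k => hpos (k + 1) (Nat.succ_pos k)).compl
    · exact hpos k hk
  -- the coefficients a n = P(N t = n)
  set a : ℕ → ℝ := fun n => (μ {ω | N t ω = n}).toReal with ha
  have hdisj : Pairwise (Function.onFun Disjoint fun n : ℕ => {ω | N t ω = n}) := by
    intro m n hmn
    simp only [Function.onFun, Set.disjoint_left, Set.mem_setOf_eq]
    intro ω h1 h2
    exact hmn (h1 ▸ h2 ▸ rfl)
  have htsum_meas : ∑' n : ℕ, μ {ω | N t ω = n} = 1 := by
    rw [← measure_iUnion hdisj hNk_meas]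
    have : (⋃ n : ℕ, {ω | N t ω = n}) = Set.univ := by
      ext ω; simp only [Set.mem_iUnion, Set.mem_setOf_eq, Set.mem_univ, iff_true]
      exact ⟨N t ω, rfl⟩
    rw [this, measure_univ]
  have ha_nonneg : ∀ n, 0 ≤ a n := fun n => ENNReal.toReal_nonneg
  have ha_summable : Summable a :=
    ENNReal.summable_toReal (by rw [htsum_meas]; exact ENNReal.one_ne_top)
  have ha_tsum : ∑' n, a n = 1 := by
    have := ENNReal.tsum_toReal_eq (f := fun n : ℕ => μ {ω | N t ω = n})
      (fun n => measure_ne_top μ _)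
    rw [← this, htsum_meas, ENNReal.toReal_one]
  have hNM : (μ {ω | N t ω < M}).toReal = ∑ k ∈ Finset.range M, a k := by
    have hset : {ω | N t ω < M} = ⋃ k ∈ Finset.range M, {ω | N t ω = k} := by
      ext ω
      simp only [Set.mem_setOf_eq, Set.mem_iUnion, Finset.mem_range]
      constructor
      · intro h; exact ⟨N t ω, h, rfl⟩
      · rintro ⟨k, hk, rfl⟩; exact hk
    rw [hset, measure_biUnion_finset (fun m _ n _ hmn => hdisj hmn) (fun k _ => hNk_meas k)]
    exact ENNReal.toReal_sum fun k _ => measure_ne_top μ _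
  -- summability facts
  have hq_summable : ∀ j, Summable (fun n => (Q ^ n) i j * a n) := by
    intro j
    refine Summable.of_nonneg_of_le
      (fun n => mul_nonneg (hQpow_nonneg n i j) (ha_nonneg n)) (fun n => ?_) ha_summable
    nlinarith [hQpow_le_one n i j, ha_nonneg n, hQpow_nonneg n i j]
  have habs_summable : ∀ j, Summable (fun n => |(Q ^ n) i j - π j| * a n) := by
    intro j
    refine Summable.of_nonneg_of_le
      (fun n => mul_nonneg (abs_nonneg _) (ha_nonneg n)) (fun n => ?_)
      (ha_summable.mul_left 2)
    have h1 : |(Q ^ n) i j - π j| ≤ 2 := by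
      refine (abs_sub _ _).trans ?_
      rw [abs_of_nonneg (hQpow_nonneg n i j), abs_of_nonneg (hπnonneg j)]
      have := hπsum
      have hπle : π j ≤ 1 := by
        calc π j ≤ ∑ x, π x := Finset.single_le_sum (fun x _ => hπnonneg x) (Finset.mem_univ j)
          _ = 1 := hπsum
      linarith [hQpow_le_one n i j]
    nlinarith [ha_nonneg n, abs_nonneg ((Q ^ n) i j - π j)]
  have hp' : ∀ j, p i j t = ∑' n, (Q ^ n) i j * a n := fun j => hp i j t
  have hp_sub : ∀ j, p i j t - π j = ∑' n, ((Q ^ n) i j - π j) * a n := by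
    intro j
    rw [hp' j]
    have h1 : π j = ∑' n, π j * a n := by rw [tsum_mul_left, ha_tsum, mul_one]
    calc (∑' n, (Q ^ n) i j * a n) - π j
        = (∑' n, (Q ^ n) i j * a n) - ∑' n, π j * a n := by rw [← h1]
      _ = ∑' n, ((Q ^ n) i j * a n - π j * a n) :=
          (Summable.tsum_sub (hq_summable j) (ha_summable.mul_left (π j))).symm
      _ = ∑' n, ((Q ^ n) i j - π j) * a n := by
          congr 1; funext n; ring
  have hstep1 : tvDist (fun j => p i j t) π ≤ ∑' n, a n * d n := by
    have h1 : ∀ x, |p i x t - π x| ≤ ∑' n, |(Q ^ n) i x - π x| * a n := by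
      intro x
      rw [hp_sub x]
      have h2 : Summable (fun n => ‖((Q ^ n) i x - π x) * a n‖) := by
        have : (fun n => ‖((Q ^ n) i x - π x) * a n‖)
            = fun n => |(Q ^ n) i x - π x| * a n := by
          funext n
          rw [Real.norm_eq_abs, abs_mul, abs_of_nonneg (ha_nonneg n)]
        rw [this]; exact habs_summable x
      have h3 := norm_tsum_le_tsum_norm h2
      simp only [Real.norm_eq_abs, abs_mul] at h3
      calc |∑' n, ((Q ^ n) i x - π x) * a n|
          ≤ ∑' n, |(Q ^ n) i x - π x| * |a n| := h3
        _ = ∑' n, |(Q ^ n) i x - π x| * a n := by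
            congr 1; funext n; rw [abs_of_nonneg (ha_nonneg n)]
    have h2 : ∑' n, ∑ x, |(Q ^ n) i x - π x| * a n
        = ∑ x, ∑' n, |(Q ^ n) i x - π x| * a n :=
      Summable.tsum_finsetSum fun x _ => habs_summable x
    calc tvDist (fun j => p i j t) π
        = (1 / 2) * ∑ x, |p i x t - π x| := rfl
      _ ≤ (1 / 2) * ∑ x, ∑' n, |(Q ^ n) i x - π x| * a n :=
          mul_le_mul_of_nonneg_left (Finset.sum_le_sum fun x _ => h1 x) (by norm_num)
      _ = (1 / 2) * ∑' n, ∑ x, |(Q ^ n) i x - π x| * a n := by rw [h2]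
      _ = ∑' n, a n * d n := by
          rw [← tsum_mul_left]
          congr 1; funext n
          show (1 / 2) * ∑ x, |(Q ^ n) i x - π x| * a n
              = a n * ((1 / 2) * ∑ x, |(Q ^ n) i x - π x|)
          rw [← Finset.sum_mul]
          ring
  have had_summable : Summable (fun n => a n * d n) := by
    refine Summable.of_nonneg_of_le
      (fun n => mul_nonneg (ha_nonneg n) (hd_nonneg n)) (fun n => ?_) ha_summable
    nlinarith [hd_le_one n, ha_nonneg n, hd_nonneg n]
  have hif_summable : Summable (fun n : ℕ => if n < M then a n else 0) := by
    refine summable_of_ne_finset_zero (s := Finset.range M) fun n hn => ?_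
    rw [if_neg (by simpa using hn)]
  have hstep2 : ∑' n, a n * d n ≤ (∑ k ∈ Finset.range M, a k) + d M := by
    have hle : ∀ n, a n * d n ≤ (if n < M then a n else 0) + d M * a n := by
      intro n
      by_cases h : n < M
      · rw [if_pos h]
        nlinarith [hd_le_one n, ha_nonneg n, hd_nonneg M,
          mul_nonneg (hd_nonneg M) (ha_nonneg n)]
      · rw [if_neg h]
        have hdn : d n ≤ d M := hd_anti M n (le_of_not_gt h)
        nlinarith [ha_nonneg n]
    have hrhs : Summable (fun n : ℕ => (if n < M then a n else 0) + d M * a n) :=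
      hif_summable.add (ha_summable.mul_left _)
    calc ∑' n, a n * d n
        ≤ ∑' n, ((if n < M then a n else 0) + d M * a n) :=
          Summable.tsum_le_tsum hle had_summable hrhs
      _ = (∑' n, if n < M then a n else 0) + ∑' n, d M * a n :=
          Summable.tsum_add hif_summable (ha_summable.mul_left _)
      _ = (∑ k ∈ Finset.range M, a k) + d M := by
          rw [tsum_mul_left, ha_tsum, mul_one]
          congr 1
          rw [tsum_eq_sum (s := Finset.range M) fun n hn => if_neg (by simpa using hn)]
          exact Finset.sum_congr rfl fun k hk => if_pos (Finset.mem_range.mp hk)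
  have hthird : 0 ≤ d L * (μ {ω | L < N t ω}).toReal :=
    mul_nonneg (hd_nonneg L) ENNReal.toReal_nonneg
  calc tvDist (fun j => p i j t) π
      ≤ ∑' n, a n * d n := hstep1
    _ ≤ (∑ k ∈ Finset.range M, a k) + d M := hstep2
    _ = (μ {ω | N t ω < M}).toReal + d M := by rw [hNM]
    _ ≤ (μ {ω | N t ω < M}).toReal + d M + d L * (μ {ω | L < N t ω}).toReal := by
        linarith
    _ = _ := rfl
end

section
/- (Spectral bound on the distance from equilibrium) Suppose the N×N transition matrix Q is diagonalizable over ℂ as L Q L^{-1} = D = diag(λ_1, …, λ_N), with λ_1 = 1, |λ_k| ≤ |λ_2| < 1 for all k ≥ 2, the first row of L equal to π and the first column of L^{-1} all ones. Then there is a constant C_N depending only on L (one may take C_N = max_{i,j} Σ_{k=2}^N |ℓ̃_{ik}| |ℓ_{kj}|) such that for every state i and all t ≥ 0: sup_j |p_{i,j}(t) − π_j| ≤ C_N · E(|λ_2|^{N(t)}). -/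
open MeasureTheory ProbabilityTheory Filter Finset

/-- spectral bound on the distance from equilibrium: if `Q` is
diagonalizable over `ℂ` with `λ₁ = 1` and `|λ_k| ≤ |λ₂| < 1` for `k ≥ 2`, then with
`C_N = max_{i,j} ∑_{k=2}^N |ℓ̃_{ik}| |ℓ_{kj}|` one has, for every state `i` and `t ≥ 0`,
`sup_j |p_{i,j}(t) − π_j| ≤ C_N · E(|λ₂|^{N(t)})`. -/
theorem spectral_bound_distance_from_equilibrium
    (n : ℕ) [NeZero n] (hn : 2 ≤ n)
    (Q : Matrix (Fin n) (Fin n) ℝ)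
    (hQnonneg : ∀ i j, 0 ≤ Q i j)
    (hQrow : ∀ i, ∑ j, Q i j = 1)
    (π : Fin n → ℝ)
    (hconv : ∀ i j, Tendsto (fun m : ℕ => (Q ^ m) i j) atTop (nhds (π j)))
    (L Linv : Matrix (Fin n) (Fin n) ℂ)
    (hLL : L * Linv = 1) (hLL' : Linv * L = 1)
    (lam : Fin n → ℂ)
    (hdiag : L * Q.map (fun x => (x : ℂ)) * Linv = Matrix.diagonal lam)
    (hlam1 : lam 0 = 1)
    (hlamle : ∀ k : Fin n, k ≠ 0 → ‖lam k‖ ≤ ‖lam 1‖)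
    (hlam2 : ‖lam 1‖ < 1)
    (hLrow : ∀ j, L 0 j = (π j : ℂ))
    (hLinvcol : ∀ i, Linv i 0 = 1)
    {Ω : Type*} [MeasurableSpace Ω] (μ : Measure Ω) [IsProbabilityMeasure μ]
    (T : ℕ → Ω → ℝ)
    (hTmeas : ∀ m, Measurable (T m))
    (hTpos : ∀ m, ∀ᵐ ω ∂μ, 0 < T m ω)
    (hTindep : iIndepFun T μ)
    (hTident : ∀ m, IdentDistrib (T m) (T 0) μ μ)
    (Spart : ℕ → Ω → ℝ)
    (hSpart : ∀ m ω, Spart m ω = ∑ k ∈ Finset.range m, T k ω)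
    (N : ℝ → Ω → ℕ)
    (hN : ∀ t ω, N t ω = sSup {m : ℕ | Spart m ω ≤ t})
    (p : Fin n → Fin n → ℝ → ℝ)
    (hp : ∀ i j t, p i j t = ∑' m : ℕ, (Q ^ m) i j * (μ {ω | N t ω = m}).toReal)
    (C : ℝ)
    (hC : C = ⨆ i : Fin n, ⨆ j : Fin n,
      ∑ k ∈ Finset.univ.erase (0 : Fin n), ‖Linv i k‖ * ‖L k j‖) :
    ∀ (i : Fin n) (t : ℝ), 0 ≤ t → ∀ j : Fin n,
      |p i j t - π j| ≤ C * ∫ ω, ‖lam 1‖ ^ (N t ω) ∂μ := by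
  intro i t ht j
  set r : ℝ := ‖lam 1‖ with hr
  have hr0 : 0 ≤ r := norm_nonneg _
  have hr1 : r ≤ 1 := le_of_lt hlam2
  -- C bounds
  have hCb : ∀ i' j' : Fin n,
      (∑ k ∈ Finset.univ.erase (0 : Fin n),
        ‖Linv i' k‖ * ‖L k j'‖) ≤ C := by
    intro i' j'
    rw [hC]
    have h1 : (∑ k ∈ Finset.univ.erase (0 : Fin n),
        ‖Linv i' k‖ * ‖L k j'‖) ≤
        ⨆ j'' : Fin n, ∑ k ∈ Finset.univ.erase (0 : Fin n),
          ‖Linv i' k‖ * ‖L k j''‖ :=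
      le_ciSup (f := fun j'' : Fin n => ∑ k ∈ Finset.univ.erase (0 : Fin n),
        ‖Linv i' k‖ * ‖L k j''‖)
        (Set.Finite.bddAbove (Set.finite_range _)) j'
    exact h1.trans (le_ciSup (f := fun i'' : Fin n => ⨆ j'' : Fin n,
      ∑ k ∈ Finset.univ.erase (0 : Fin n),
        ‖Linv i'' k‖ * ‖L k j''‖)
      (Set.Finite.bddAbove (Set.finite_range _)) i')
  have hC0 : 0 ≤ C := by
    refine le_trans ?_ (hCb 0 0)
    exact Finset.sum_nonneg fun k _ =>
      mul_nonneg (norm_nonneg _) (norm_nonneg _)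
  -- Step A: matrix algebra
  have hQM : Q.map (fun x => (x : ℂ)) = Linv * Matrix.diagonal lam * L := by
    rw [← hdiag]
    calc Q.map (fun x => (x : ℂ)) = 1 * Q.map (fun x => (x : ℂ)) * 1 := by simp
      _ = (Linv * L) * Q.map (fun x => (x : ℂ)) * (Linv * L) := by rw [hLL']
      _ = Linv * (L * Q.map (fun x => (x : ℂ)) * Linv) * L := by
          simp only [mul_assoc]
  have hM : ∀ m : ℕ, (Q.map (fun x => (x : ℂ))) ^ m =
      Linv * Matrix.diagonal (fun k => lam k ^ m) * L := by
    intro m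
    induction m with
    | zero =>
        simp only [pow_zero]
        simp [Matrix.diagonal_one, hLL']
    | succ m ih =>
        rw [pow_succ, ih, hQM]
        calc Linv * Matrix.diagonal (fun k => lam k ^ m) * L *
              (Linv * Matrix.diagonal lam * L)
            = Linv * (Matrix.diagonal (fun k => lam k ^ m) * ((L * Linv) *
                Matrix.diagonal lam)) * L := by
              simp only [mul_assoc]
          _ = Linv * (Matrix.diagonal (fun k => lam k ^ m) * Matrix.diagonal lam) * L := by
              rw [hLL, one_mul]
          _ = Linv * Matrix.diagonal (fun k => lam k ^ (m + 1)) * L := by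
              simp only [Matrix.diagonal_mul_diagonal, ← pow_succ]
  have hmap : ∀ m : ℕ, (Q.map (fun x => (x : ℂ))) ^ m = (Q ^ m).map (fun x => (x : ℂ)) := by
    intro m
    induction m with
    | zero =>
        simp only [pow_zero]
        exact (Matrix.map_one _ Complex.ofReal_zero Complex.ofReal_one).symm
    | succ m ih =>
        rw [pow_succ, pow_succ, ih]
        ext a b
        simp [Matrix.mul_apply, Matrix.map_apply]
  have hent : ∀ m : ℕ, (((Q ^ m) i j - π j : ℝ) : ℂ) =
      ∑ k ∈ Finset.univ.erase (0 : Fin n), Linv i k * lam k ^ m * L k j := by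
    intro m
    have h1 : ((Q ^ m) i j : ℂ) = ∑ k, Linv i k * lam k ^ m * L k j := by
      have h2 := congrFun (congrFun ((hmap m).symm.trans (hM m)) i) j
      rw [Matrix.mul_apply] at h2
      simp only [Matrix.mul_diagonal] at h2
      simpa [Matrix.map_apply] using h2
    have h3 : (∑ k, Linv i k * lam k ^ m * L k j) =
        (∑ k ∈ Finset.univ.erase (0 : Fin n), Linv i k * lam k ^ m * L k j) +
          Linv i 0 * lam 0 ^ m * L 0 j :=
      (Finset.sum_erase_add _ _ (Finset.mem_univ _)).symm
    rw [Complex.ofReal_sub, h1, h3, hLinvcol, hlam1, one_pow, one_mul, one_mul, hLrow]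
    ring
  have hkey : ∀ m : ℕ, |(Q ^ m) i j - π j| ≤ C * r ^ m := by
    intro m
    calc |(Q ^ m) i j - π j| = ‖(((Q ^ m) i j - π j : ℝ) : ℂ)‖ :=
          by rw [Complex.norm_real, Real.norm_eq_abs]
      _ = ‖∑ k ∈ Finset.univ.erase (0 : Fin n),
            Linv i k * lam k ^ m * L k j‖ := by rw [hent m]
      _ ≤ ∑ k ∈ Finset.univ.erase (0 : Fin n),
            ‖Linv i k * lam k ^ m * L k j‖ :=
          norm_sum_le _ _
      _ ≤ ∑ k ∈ Finset.univ.erase (0 : Fin n),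
            ‖Linv i k‖ * ‖L k j‖ * r ^ m := by
          refine Finset.sum_le_sum fun k hk => ?_
          rw [norm_mul, norm_mul, norm_pow]
          have hk0 : k ≠ 0 := Finset.ne_of_mem_erase hk
          have hle : ‖lam k‖ ^ m ≤ r ^ m :=
            pow_le_pow_left₀ (norm_nonneg _) (hlamle k hk0) m
          calc ‖Linv i k‖ * ‖lam k‖ ^ m * ‖L k j‖
              ≤ ‖Linv i k‖ * r ^ m * ‖L k j‖ := by
                apply mul_le_mul_of_nonneg_right _ (norm_nonneg _)
                exact mul_le_mul_of_nonneg_left hle (norm_nonneg _)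
            _ = ‖Linv i k‖ * ‖L k j‖ * r ^ m := by ring
      _ = (∑ k ∈ Finset.univ.erase (0 : Fin n),
            ‖Linv i k‖ * ‖L k j‖) * r ^ m := by
          rw [← Finset.sum_mul]
      _ ≤ C * r ^ m := mul_le_mul_of_nonneg_right (hCb i j) (pow_nonneg hr0 m)
  -- nonnegativity and row-stochasticity of Q ^ m
  have hQmnn : ∀ m : ℕ, ∀ a b, 0 ≤ (Q ^ m) a b := by
    intro m
    induction m with
    | zero => intro a b; rcases eq_or_ne a b with h | h <;>
        simp [pow_zero, Matrix.one_apply, h]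
    | succ m ih =>
        intro a b
        rw [pow_succ, Matrix.mul_apply]
        exact Finset.sum_nonneg fun k _ => mul_nonneg (ih a k) (hQnonneg k b)
  have hQmrow : ∀ m : ℕ, ∀ a, ∑ b, (Q ^ m) a b = 1 := by
    intro m
    induction m with
    | zero => intro a; simp [pow_zero, Matrix.one_apply]
    | succ m ih =>
        intro a
        simp only [pow_succ, Matrix.mul_apply]
        rw [Finset.sum_comm]
        calc ∑ k, ∑ b, (Q ^ m) a k * Q k b = ∑ k, (Q ^ m) a k * ∑ b, Q k b := by
              simp [Finset.mul_sum]
          _ = 1 := by simp [hQrow, ih a]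
  have hQmle1 : ∀ m : ℕ, |(Q ^ m) i j| ≤ 1 := by
    intro m
    rw [abs_of_nonneg (hQmnn m i j), ← hQmrow m i]
    exact Finset.single_le_sum (fun b _ => hQmnn m i b) (Finset.mem_univ j)
  -- Step B: the events {N t = m}
  have hSmeas : ∀ m, Measurable (Spart m) := by
    intro m
    have : Spart m = fun ω => ∑ k ∈ Finset.range m, T k ω := funext fun ω => hSpart m ω
    rw [this]
    exact Finset.measurable_sum _ fun k _ => hTmeas k
  have hzero : ∀ ω, (0 : ℕ) ∈ {m : ℕ | Spart m ω ≤ t} := by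
    intro ω
    simp [Set.mem_setOf_eq, hSpart, ht]
  have hset : ∀ m : ℕ, {ω | N t ω = m + 1} =
      {ω | Spart (m + 1) ω ≤ t} ∩ ⋂ k : ℕ, {ω | t < Spart (m + 2 + k) ω} := by
    intro m
    ext ω
    simp only [Set.mem_inter_iff, Set.mem_iInter, Set.mem_setOf_eq, hN]
    constructor
    · intro h
      have hne : ({l : ℕ | Spart l ω ≤ t}).Nonempty := ⟨0, hzero ω⟩
      have hbdd : BddAbove {l : ℕ | Spart l ω ≤ t} := by
        by_contra hb
        rw [csSup_of_not_bddAbove hb, csSup_empty] at h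
        exact Nat.succ_ne_zero m h.symm
      refine ⟨?_, ?_⟩
      · have := Nat.sSup_mem hne hbdd
        rw [h] at this
        exact this
      · intro k
        by_contra hk
        push_neg at hk
        have h2 : m + 2 + k ≤ sSup {l : ℕ | Spart l ω ≤ t} := le_csSup hbdd hk
        omega
    · rintro ⟨h1, h2⟩
      have hub : ∀ l ∈ {l : ℕ | Spart l ω ≤ t}, l ≤ m + 1 := by
        intro l hl
        by_contra hl'
        push_neg at hl'
        have h3 := h2 (l - (m + 2))
        rw [show m + 2 + (l - (m + 2)) = l from by omega] at h3
        exact absurd hl (not_le.2 h3)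
      exact le_antisymm (csSup_le ⟨m + 1, h1⟩ hub) (le_csSup ⟨m + 1, hub⟩ h1)
  have hA : ∀ m : ℕ, MeasurableSet {ω | N t ω = m} := by
    have hA1 : ∀ m : ℕ, MeasurableSet {ω | N t ω = m + 1} := by
      intro m
      rw [hset m]
      exact ((hSmeas (m + 1) measurableSet_Iic).inter
        (MeasurableSet.iInter fun k => (hSmeas (m + 2 + k)) measurableSet_Ioi))
    intro m
    match m with
    | 0 =>
        have h0 : {ω | N t ω = 0} = (⋃ m : ℕ, {ω | N t ω = m + 1})ᶜ := by
          ext ω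
          simp only [Set.mem_compl_iff, Set.mem_iUnion, Set.mem_setOf_eq, not_exists]
          constructor
          · intro h k hk
            omega
          · intro h
            by_contra h'
            exact h (N t ω - 1) (by omega)
        rw [h0]
        exact (MeasurableSet.iUnion fun m => hA1 m).compl
    | m + 1 => exact hA1 m
  have hNmeas : Measurable (N t) := by
    apply measurable_to_countable'
    intro m
    have : N t ⁻¹' {m} = {ω | N t ω = m} := by
      ext ω; simp [Set.mem_preimage]
    rw [this]
    exact hA m
  have hdisj : Pairwise (Function.onFun Disjoint fun m : ℕ => {ω | N t ω = m}) := by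
    intro a b hab
    simp only [Function.onFun, Set.disjoint_left, Set.mem_setOf_eq]
    intro ω h1 h2
    exact hab (h1 ▸ h2 ▸ rfl)
  have hcover : (⋃ m : ℕ, {ω | N t ω = m}) = Set.univ := by
    ext ω
    simp only [Set.mem_iUnion, Set.mem_setOf_eq, Set.mem_univ, iff_true]
    exact ⟨N t ω, rfl⟩
  have hsum1 : (∑' m : ℕ, μ {ω | N t ω = m}) = 1 := by
    rw [← measure_iUnion hdisj hA, hcover, measure_univ]
  set f : ℕ → ℝ := fun m => (μ {ω | N t ω = m}).toReal with hfdef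
  have hfs : Summable f := ENNReal.summable_toReal (by rw [hsum1]; exact ENNReal.one_ne_top)
  have hf1 : (∑' m, f m) = 1 := by
    rw [hfdef, ← ENNReal.tsum_toReal_eq (fun m => measure_ne_top μ _), hsum1,
      ENNReal.toReal_one]
  have hf0 : ∀ m, 0 ≤ f m := fun m => ENNReal.toReal_nonneg
  -- summabilities
  have hg : Summable fun m : ℕ => (Q ^ m) i j * f m := by
    apply Summable.of_nonneg_of_le (fun m => mul_nonneg (hQmnn m i j) (hf0 m))
      (fun m => ?_) hfs
    calc (Q ^ m) i j * f m ≤ 1 * f m := by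
          apply mul_le_mul_of_nonneg_right _ (hf0 m)
          exact (le_abs_self _).trans (hQmle1 m)
      _ = f m := one_mul _
  have hh : Summable fun m : ℕ => π j * f m := hfs.mul_left _
  have hrf : Summable fun m : ℕ => r ^ m * f m := by
    apply Summable.of_nonneg_of_le (fun m => mul_nonneg (pow_nonneg hr0 m) (hf0 m))
      (fun m => ?_) hfs
    calc r ^ m * f m ≤ 1 * f m :=
          mul_le_mul_of_nonneg_right (pow_le_one₀ hr0 hr1) (hf0 m)
      _ = f m := one_mul _
  have hbdd : Summable fun m : ℕ => C * (r ^ m * f m) := hrf.mul_left C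
  have habsd : Summable fun m : ℕ => |((Q ^ m) i j - π j) * f m| := by
    apply Summable.of_nonneg_of_le (fun m => abs_nonneg _) (fun m => ?_) hbdd
    rw [abs_mul, abs_of_nonneg (hf0 m)]
    calc |(Q ^ m) i j - π j| * f m ≤ (C * r ^ m) * f m :=
          mul_le_mul_of_nonneg_right (hkey m) (hf0 m)
      _ = C * (r ^ m * f m) := by ring
  have hd : Summable fun m : ℕ => ((Q ^ m) i j - π j) * f m :=
    habsd.of_abs
  -- main identity
  have hps : p i j t - π j = ∑' m : ℕ, ((Q ^ m) i j - π j) * f m := by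
    calc p i j t - π j = (∑' m : ℕ, (Q ^ m) i j * f m) - π j * ∑' m, f m := by
          rw [hp, hf1, mul_one]
      _ = (∑' m : ℕ, (Q ^ m) i j * f m) - ∑' m : ℕ, π j * f m := by
          rw [tsum_mul_left]
      _ = ∑' m : ℕ, ((Q ^ m) i j * f m - π j * f m) := (Summable.tsum_sub hg hh).symm
      _ = ∑' m : ℕ, ((Q ^ m) i j - π j) * f m := tsum_congr fun m => by ring
  -- the integral
  have hint : (∫ ω, r ^ (N t ω) ∂μ) = ∑' m : ℕ, r ^ m * f m := by
    have hprob : IsProbabilityMeasure (μ.map (N t)) :=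
      Measure.isProbabilityMeasure_map hNmeas.aemeasurable
    have hInt : Integrable (fun m : ℕ => r ^ m) (μ.map (N t)) := by
      apply Integrable.mono' (integrable_const (1 : ℝ))
        measurable_from_nat.aestronglyMeasurable
      filter_upwards with m
      rw [Real.norm_eq_abs, abs_pow, abs_of_nonneg hr0]
      exact pow_le_one₀ hr0 hr1
    have hmap2 : (∫ m : ℕ, r ^ m ∂(μ.map (N t))) = ∫ ω, r ^ (N t ω) ∂μ :=
      integral_map hNmeas.aemeasurable measurable_from_nat.aestronglyMeasurable
    rw [← hmap2, MeasureTheory.integral_countable' hInt]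
    apply tsum_congr
    intro m
    have hmm : (μ.map (N t)) {m} = μ {ω | N t ω = m} := by
      rw [Measure.map_apply hNmeas (measurableSet_singleton m)]
      congr 1
    rw [Measure.real, hmm, smul_eq_mul, mul_comm]
  -- conclusion
  rw [hps, hint]
  calc |∑' m : ℕ, ((Q ^ m) i j - π j) * f m| ≤
        ∑' m : ℕ, |((Q ^ m) i j - π j) * f m| := by
        have := norm_tsum_le_tsum_norm (f := fun m : ℕ => ((Q ^ m) i j - π j) * f m)
          (by simpa only [Real.norm_eq_abs] using habsd)
        simpa only [Real.norm_eq_abs] using this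
    _ ≤ ∑' m : ℕ, C * (r ^ m * f m) := by
        apply Summable.tsum_le_tsum _ habsd hbdd
        intro m
        rw [abs_mul, abs_of_nonneg (hf0 m)]
        calc |(Q ^ m) i j - π j| * f m ≤ (C * r ^ m) * f m :=
              mul_le_mul_of_nonneg_right (hkey m) (hf0 m)
          _ = C * (r ^ m * f m) := by ring
    _ = C * ∑' m : ℕ, r ^ m * f m := tsum_mul_left
end
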